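/- If T is a full binary tree of height h (root of degree 2, all internal non-root vertices of degree 3, all leaves at distance exactly h from the root), then th₊(T) = h + 1. -/

import Mathlib

open SimpleGraph

/-- Reachability in `G` avoiding the blue set `B` (i.e., within a white component). -/
def offReach {V : Type*} (G : SimpleGraph V) (B : Set V) : V → V → Prop :=
  Relation.ReflTransGen (fun a b => G.Adj a b ∧ a ∉ B ∧ b ∉ B)

/-- The positive semidefinite color change rule: a blue vertex `v` forces a white vertex `w`
if `w` is the unique white neighbor of `v` in the white component of `w` (together with `B`). -/
def psdForces {V : Type*} (G : SimpleGraph V) (B : Set V) (v w : V) : Prop :=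
  v ∈ B ∧ w ∉ B ∧ G.Adj v w ∧
    ∀ u, u ∉ B → G.Adj v u → offReach G B u w → u = w

/-- One round of PSD forcing: perform all possible forces. -/
def psdStep {V : Type*} (G : SimpleGraph V) (B : Set V) : Set V :=
  B ∪ {w | ∃ v, psdForces G B v w}

/-- `S` is a positive semidefinite zero forcing set. -/
def IsPSDForcingSet {V : Type*} (G : SimpleGraph V) (S : Set V) : Prop :=
  ∃ t, (psdStep G)^[t] S = Set.univ

/-- The PSD propagation time of `S`. -/
noncomputable def psdPt {V : Type*} (G : SimpleGraph V) (S : Set V) : ℕ :=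
  sInf {t | (psdStep G)^[t] S = Set.univ}

/-- The PSD throttling number of `G`. -/
noncomputable def psdTh {V : Type*} (G : SimpleGraph V) [Fintype V] : ℕ :=
  sInf {k | ∃ S : Finset V, IsPSDForcingSet G ↑S ∧ k = S.card + psdPt G ↑S}


open scoped Classical
section
variable {V : Type*} {T : SimpleGraph V}

/-- distance from a support vertex to the endpoint is at most the walk length -/
lemma dist_le_of_mem_support {u s x : V} (p : T.Walk u s) (hx : x ∈ p.support) :
    T.dist x s ≤ p.length :=
  le_trans (T.dist_le (p.dropUntil x hx)) (p.length_dropUntil_le hx)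

/-- uniqueness of the neighbor toward `s` in a tree -/
lemma tree_unique_down (hT : T.IsTree) {v s u₁ u₂ : V} {d : ℕ}
    (hv : T.dist v s = d + 1)
    (h1 : T.Adj v u₁) (hd1 : T.dist u₁ s ≤ d)
    (h2 : T.Adj v u₂) (hd2 : T.dist u₂ s ≤ d) : u₁ = u₂ := by
  obtain ⟨p₁, hp₁, hl₁⟩ := (hT.isConnected.1 u₁ s).exists_path_of_dist
  obtain ⟨p₂, hp₂, hl₂⟩ := (hT.isConnected.1 u₂ s).exists_path_of_dist
  have hv1 : v ∉ p₁.support := fun hx => by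
    have := dist_le_of_mem_support p₁ hx
    omega
  have hv2 : v ∉ p₂.support := fun hx => by
    have := dist_le_of_mem_support p₂ hx
    omega
  have hq1 : (Walk.cons h1 p₁).IsPath := hp₁.cons hv1
  have hq2 : (Walk.cons h2 p₂).IsPath := hp₂.cons hv2
  have := (hT.existsUnique_path v s).unique hq1 hq2
  have hs := congrArg Walk.support this
  rw [Walk.support_cons, Walk.support_cons, p₁.support_eq_cons, p₂.support_eq_cons] at hs
  exact (List.cons.inj (List.cons.inj hs).2).1

/-- existence of a neighbor toward `s` -/
lemma exists_down (hc : T.Connected) {v s : V} {d : ℕ} (hv : T.dist v s = d + 1) :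
    ∃ u, T.Adj v u ∧ T.dist u s = d := by
  obtain ⟨p, hl⟩ := (hc.1 v s).exists_walk_length_eq_dist
  rw [hv] at hl
  cases p with
  | nil => simp at hl
  | @cons _ u _ h q =>
    refine ⟨u, h, le_antisymm ?_ ?_⟩
    · have := T.dist_le q
      simp only [Walk.length_cons] at hl
      omega
    · have := hc.dist_triangle (u := v) (v := u) (w := s)
      have h1 : T.dist v u ≤ 1 := T.dist_le (Walk.cons h Walk.nil)
      omega

/-- adjacent vertices have different distances to any vertex, in a tree -/
lemma tree_adj_dist_ne (hT : T.IsTree) {x y s : V} (hxy : T.Adj x y) :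
    T.dist x s ≠ T.dist y s := by
  intro hd
  set d := T.dist y s with hdy
  have hx0 : T.dist x s = d := hd
  -- d ≠ 0
  rcases Nat.eq_zero_or_pos d with h0 | hdpos
  · have hx : x = s := (hT.isConnected.dist_eq_zero_iff).mp (by omega)
    have hy : y = s := (hT.isConnected.dist_eq_zero_iff).mp (by omega)
    exact T.irrefl (hx ▸ hy ▸ hxy)
  obtain ⟨p, hp, hl⟩ := (hT.isConnected.1 x s).exists_path_of_dist
  by_cases hy : y ∈ p.support
  · -- then dist y s < d : takeUntil from x to y has length ≥ 1
    have hsplit := congrArg Walk.length (p.take_spec hy)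
    rw [Walk.length_append] at hsplit
    have htake : (p.takeUntil y hy).length ≠ 0 := by
      intro h0'
      exact hxy.ne (Walk.eq_of_length_eq_zero h0')
    have hdrop := T.dist_le (p.dropUntil y hy)
    omega
  · have hq : (Walk.cons (hxy.symm) p).IsPath := hp.cons hy
    obtain ⟨p', hp', hl'⟩ := (hT.isConnected.1 y s).exists_path_of_dist
    have := (hT.existsUnique_path y s).unique hq hp'
    have := congrArg Walk.length this
    rw [Walk.length_cons, hl, hl'] at this
    omega

/-- the parent of `v` in the direction of `s` -/
noncomputable def par (T : SimpleGraph V) (s v : V) : V :=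
  if h : ∃ u, T.Adj v u ∧ T.dist u s + 1 = T.dist v s then h.choose else v

lemma par_spec (hc : T.Connected) {s v : V} {d : ℕ} (hv : T.dist v s = d + 1) :
    T.Adj v (par T s v) ∧ T.dist (par T s v) s = d := by
  obtain ⟨u, hu, hd⟩ := exists_down hc hv
  have hex : ∃ u, T.Adj v u ∧ T.dist u s + 1 = T.dist v s := ⟨u, hu, by omega⟩
  rw [par, dif_pos hex]
  obtain ⟨h1, h2⟩ := hex.choose_spec
  exact ⟨h1, by omega⟩

lemma par_eq (hT : T.IsTree) {s v u : V} {d : ℕ} (hv : T.dist v s = d + 1)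
    (hu : T.Adj v u) (hd : T.dist u s ≤ d) : par T s v = u :=
  tree_unique_down hT hv (par_spec hT.isConnected hv).1 (le_of_eq (par_spec hT.isConnected hv).2)
    hu hd

/-- the ancestor invariant along white edges -/
lemma anc_edge (hT : T.IsTree) {s x y : V} {t : ℕ} (hxy : T.Adj x y)
    (hx : t + 1 ≤ T.dist x s) (hy : t + 1 ≤ T.dist y s) :
    (par T s)^[T.dist x s - (t+1)] x = (par T s)^[T.dist y s - (t+1)] y := by
  have hne := tree_adj_dist_ne hT hxy (s := s)
  have h1 : T.dist x s ≤ T.dist y s + 1 := by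
    have := hT.isConnected.dist_triangle (u := x) (v := y) (w := s)
    have : T.dist x y ≤ 1 := T.dist_le (Walk.cons hxy Walk.nil)
    omega
  have h2 : T.dist y s ≤ T.dist x s + 1 := by
    have := hT.isConnected.dist_triangle (u := y) (v := x) (w := s)
    have : T.dist y x ≤ 1 := T.dist_le (Walk.cons hxy.symm Walk.nil)
    omega
  -- wlog via two symmetric cases
  rcases lt_or_gt_of_ne hne with hlt | hgt
  · -- dist x s < dist y s, so dist y s = dist x s + 1, par y = x
    have hdy : T.dist y s = (T.dist x s - 1) + 1 + 1 := by omega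
    have hpy : par T s y = x := par_eq hT hdy hxy.symm (by omega)
    have : T.dist y s - (t+1) = (T.dist x s - (t+1)) + 1 := by omega
    rw [this, Function.iterate_succ_apply, hpy]
  · have hdx : T.dist x s = (T.dist y s - 1) + 1 + 1 := by omega
    have hpx : par T s x = y := par_eq hT hdx hxy (by omega)
    have : T.dist x s - (t+1) = (T.dist y s - (t+1)) + 1 := by omega
    rw [this, Function.iterate_succ_apply, hpx]

lemma offReach_anc (hT : T.IsTree) {r : V} {t : ℕ} {u w : V}
    (h : offReach T {x | T.dist x r ≤ t} u w) (hu : t + 1 ≤ T.dist u r) :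
    (par T r)^[T.dist u r - (t+1)] u = (par T r)^[T.dist w r - (t+1)] w := by
  induction h with
  | refl => rfl
  | tail _hab hbc ih =>
    obtain ⟨hadj, hb, hc⟩ := hbc
    simp only [Set.mem_setOf_eq, not_le] at hb hc
    exact (ih.trans (anc_edge hT hadj (by omega) (by omega)))

lemma psdStep_ball (hT : T.IsTree) (r : V) (t : ℕ) :
    psdStep T {x | T.dist x r ≤ t} = {x | T.dist x r ≤ t + 1} := by
  have htri : ∀ a b : V, T.Adj a b → T.dist b r ≤ T.dist a r + 1 := by
    intro a b hab
    have h1 := hT.isConnected.dist_triangle (u := b) (v := a) (w := r)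
    have h2 : T.dist b a ≤ 1 := T.dist_le (Walk.cons hab.symm Walk.nil)
    omega
  apply Set.eq_of_subset_of_subset
  · rintro x (hx | ⟨v, hv, _hxw, hadj, _⟩)
    · simp only [Set.mem_setOf_eq] at hx ⊢; omega
    · simp only [Set.mem_setOf_eq] at hv ⊢
      have := htri v x hadj; omega
  · intro x hx
    simp only [Set.mem_setOf_eq] at hx
    by_cases hxt : T.dist x r ≤ t
    · exact Or.inl hxt
    have hdx : T.dist x r = t + 1 := by omega
    right
    refine ⟨par T r x, (par_spec hT.isConnected hdx).2.le, by simp [hdx], 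
      (par_spec hT.isConnected hdx).1.symm, ?_⟩
    intro u hu hadj hre
    simp only [Set.mem_setOf_eq, not_le] at hu
    have hdu : T.dist u r = t + 1 := by
      have := htri (par T r x) u hadj
      have := (par_spec hT.isConnected hdx).2
      omega
    have := offReach_anc hT hre (by omega)
    rw [hdu, hdx] at this
    simpa using this

lemma iterate_ball (hT : T.IsTree) (r : V) (t : ℕ) :
    (psdStep T)^[t] {x | T.dist x r ≤ 0} = {x | T.dist x r ≤ t} := by
  induction t with
  | zero => rfl
  | succ n ih => rw [Function.iterate_succ_apply', ih, psdStep_ball hT]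

lemma upper_bound (hT : T.IsTree) (r : V) (h : ℕ) (hecc : ∀ v, T.dist v r ≤ h) :
    (psdStep T)^[h] (↑({r} : Finset V) : Set V) = Set.univ := by
  have h0 : (↑({r} : Finset V) : Set V) = {x | T.dist x r ≤ 0} := by
    ext x
    simp [Nat.le_zero, hT.isConnected.dist_eq_zero_iff]
  rw [h0, iterate_ball hT]
  ext x
  simpa using hecc x


variable [Fintype V]

lemma adj_dist_le (hc : T.Connected) {a b s : V} (hab : T.Adj a b) :
    T.dist b s ≤ T.dist a s + 1 := by
  have h1 := hc.dist_triangle (u := b) (v := a) (w := s)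
  have h2 : T.dist b a ≤ 1 := T.dist_le (Walk.cons hab.symm Walk.nil)
  omega

lemma blue_subset_ball (hc : T.Connected) (S : Set V) :
    ∀ t : ℕ, (psdStep T)^[t] S ⊆ {x | ∃ s ∈ S, T.dist x s ≤ t} := by
  intro t
  induction t with
  | zero => intro x hx; exact ⟨x, hx, by simp⟩
  | succ n ih =>
    rw [Function.iterate_succ_apply']
    rintro x (hx | ⟨v, hv, _, hadj, _⟩)
    · obtain ⟨s, hs, hd⟩ := ih hx
      exact ⟨s, hs, by omega⟩
    · obtain ⟨s, hs, hd⟩ := ih hv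
      exact ⟨s, hs, by have := adj_dist_le hc hadj (s := s); omega⟩

variable [Fintype V]

lemma ncard_deg (v : V) : (T.neighborSet v).ncard = T.degree v := by
  rw [← Nat.card_coe_set_eq, Nat.card_eq_fintype_card, card_neighborSet_eq_degree]

/-- sphere of radius j around s -/
noncomputable def sph (T : SimpleGraph V) [Fintype V] (s : V) (j : ℕ) : Finset V :=
  Finset.univ.filter (fun v => T.dist v s = j)

lemma mem_sph {s v : V} {j : ℕ} : v ∈ sph T s j ↔ T.dist v s = j := by
  simp [sph]

lemma sph_zero (hc : T.Connected) (s : V) : sph T s 0 = {s} := by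
  ext v; simp [mem_sph, hc.dist_eq_zero_iff]

lemma sph_succ_le (hT : T.IsTree) (hdeg3 : ∀ x : V, T.degree x ≤ 3) (s : V) {j : ℕ}
    (hj : 1 ≤ j) : (sph T s (j + 1)).card ≤ 2 * (sph T s j).card := by
  apply Finset.card_le_mul_card_image_of_maps_to (f := par T s) (t := sph T s j)
  · intro y hy
    rw [mem_sph] at hy ⊢
    exact (par_spec hT.isConnected hy).2
  · intro x hx
    rw [mem_sph] at hx
    have hsub : (sph T s (j+1)).filter (fun y => par T s y = x) ⊆
        (T.neighborFinset x).erase (par T s x) := by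
      intro y hy
      rw [Finset.mem_filter, mem_sph] at hy
      obtain ⟨hdy, hpy⟩ := hy
      have hspec := par_spec hT.isConnected hdy
      rw [hpy] at hspec
      rw [Finset.mem_erase, mem_neighborFinset]
      refine ⟨?_, hspec.1.symm⟩
      intro hcon
      have hx' : T.dist x s = (j - 1) + 1 := by omega
      have := (par_spec hT.isConnected hx').2
      rw [← hcon] at this
      omega
    have hx' : T.dist x s = (j - 1) + 1 := by omega
    have hmem : par T s x ∈ T.neighborFinset x := by
      rw [mem_neighborFinset]; exact (par_spec hT.isConnected hx').1
    calc ((sph T s (j+1)).filter (fun y => par T s y = x)).card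
        ≤ ((T.neighborFinset x).erase (par T s x)).card := Finset.card_le_card hsub
      _ = T.degree x - 1 := by rw [Finset.card_erase_of_mem hmem]; rfl
      _ ≤ 2 := by have := hdeg3 x; omega

lemma sph_one_le (hdeg3 : ∀ x : V, T.degree x ≤ 3) (s : V) :
    (sph T s 1).card ≤ 3 := by
  have hsub : sph T s 1 ⊆ T.neighborFinset s := by
    intro v hv
    rw [mem_sph] at hv
    rw [mem_neighborFinset]
    exact dist_eq_one_iff_adj.mp (by rw [dist_comm]; exact hv)
  exact (Finset.card_le_card hsub).trans (hdeg3 s)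

lemma sph_card_le (hT : T.IsTree) (hdeg3 : ∀ x : V, T.degree x ≤ 3) (s : V) :
    ∀ j : ℕ, 1 ≤ j → (sph T s j).card ≤ 3 * 2 ^ (j - 1) := by
  intro j
  induction j with
  | zero => omega
  | succ n ih =>
    intro _
    rcases Nat.eq_zero_or_pos n with h0 | hn
    · subst h0; simpa using sph_one_le hdeg3 s
    calc (sph T s (n+1)).card ≤ 2 * (sph T s n).card := sph_succ_le hT hdeg3 s hn
      _ ≤ 2 * (3 * 2 ^ (n-1)) := by
          exact Nat.mul_le_mul_left 2 (ih hn)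
      _ = 3 * 2 ^ n := by
          have hn' : n - 1 + 1 = n := by omega
          calc 2 * (3 * 2 ^ (n-1)) = 3 * 2 ^ (n - 1 + 1) := by rw [pow_succ]; ring
            _ = 3 * 2 ^ n := by rw [hn']
      _ = 3 * 2 ^ (n + 1 - 1) := by simp

lemma sum_two_pow (t : ℕ) : ∑ j ∈ Finset.range t, 2 ^ j = 2 ^ t - 1 := by
  induction t with
  | zero => simp
  | succ n ih =>
    rw [Finset.sum_range_succ, ih]
    have : 1 ≤ 2 ^ n := Nat.one_le_two_pow
    have : 2 ^ (n+1) = 2 * 2^n := by ring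
    omega

lemma ball_card_le (hT : T.IsTree) (hdeg3 : ∀ x : V, T.degree x ≤ 3) (s : V) (t : ℕ) :
    (Finset.univ.filter (fun v => T.dist v s ≤ t)).card ≤ 3 * 2 ^ t - 2 := by
  have hdecomp : Finset.univ.filter (fun v => T.dist v s ≤ t) =
      (Finset.range (t+1)).biUnion (fun j => sph T s j) := by
    ext v
    simp only [Finset.mem_filter, Finset.mem_univ, true_and, Finset.mem_biUnion,
      Finset.mem_range, mem_sph]
    constructor
    · intro hv; exact ⟨T.dist v s, by omega, rfl⟩
    · rintro ⟨j, hj, rfl⟩; omega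
  rw [hdecomp]
  calc ((Finset.range (t+1)).biUnion (fun j => sph T s j)).card
      ≤ ∑ j ∈ Finset.range (t+1), (sph T s j).card := Finset.card_biUnion_le
    _ ≤ (∑ j ∈ Finset.range t, 3 * 2 ^ j) + 1 := by
        rw [Finset.sum_range_succ']
        apply Nat.add_le_add
        · apply Finset.sum_le_sum
          intro j _
          have := sph_card_le hT hdeg3 s (j+1) (by omega)
          simpa using this
        · simp [sph_zero hT.isConnected s]
    _ ≤ 3 * 2 ^ t - 2 := by
        rw [← Finset.mul_sum, sum_two_pow]
        have : 1 ≤ 2 ^ t := Nat.one_le_two_pow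
        omega

lemma level_succ (hT : T.IsTree) {r : V} {h d : ℕ} (hd : d < h)
    (hroot : T.degree r = 2)
    (hdeg : ∀ v, v ≠ r → T.dist v r < h → T.degree v = 3) :
    (sph T r (d + 1)).card = 2 * (sph T r d).card := by
  have hc := hT.isConnected
  rw [Finset.card_eq_sum_card_fiberwise (f := par T r) (t := sph T r d)
    (fun y hy => by rw [Finset.mem_coe, mem_sph] at hy ⊢; exact (par_spec hc hy).2)]
  rw [Finset.sum_congr rfl (g := fun _ => 2), Finset.sum_const, smul_eq_mul, mul_comm]
  intro x hx
  rw [mem_sph] at hx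
  rcases Nat.eq_zero_or_pos d with h0 | hdpos
  · -- d = 0 : x = r, fiber is the whole neighborhood
    subst h0
    have hxr : x = r := hc.dist_eq_zero_iff.mp hx
    subst hxr
    have hfib : (sph T x 1).filter (fun y => par T x y = x) = T.neighborFinset x := by
      ext y
      simp only [Finset.mem_filter, mem_sph, mem_neighborFinset]
      constructor
      · rintro ⟨hdy, hpy⟩
        have := (par_spec hc (show T.dist y x = 0 + 1 by omega)).1
        rw [hpy] at this; exact this.symm
      · intro hadj
        have hdy : T.dist y x = 1 := dist_eq_one_iff_adj.mpr hadj.symm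
        exact ⟨hdy, par_eq hT (show T.dist y x = 0 + 1 by omega) hadj.symm (by simp)⟩
    rw [hfib]; exact hroot
  · -- d ≥ 1
    have hxr : x ≠ r := by
      intro hxr; subst hxr; rw [SimpleGraph.dist_self] at hx; omega
    have hx' : T.dist x r = (d - 1) + 1 := by omega
    have hmem : par T r x ∈ T.neighborFinset x := by
      rw [mem_neighborFinset]; exact (par_spec hc hx').1
    have hfib : (sph T r (d+1)).filter (fun y => par T r y = x) =
        (T.neighborFinset x).erase (par T r x) := by
      ext y
      simp only [Finset.mem_filter, mem_sph, Finset.mem_erase, mem_neighborFinset]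
      constructor
      · rintro ⟨hdy, hpy⟩
        have hspec := par_spec hc (show T.dist y r = d + 1 from hdy)
        rw [hpy] at hspec
        refine ⟨?_, hspec.1.symm⟩
        intro hcon
        have := (par_spec hc hx').2
        rw [← hcon] at this
        omega
      · rintro ⟨hne, hadj⟩
        have hb1 : T.dist y r ≤ d + 1 := by
          have := adj_dist_le hc (a := x) (b := y) (s := r) hadj; omega
        have hb2 : d ≤ T.dist y r + 1 := by
          have := adj_dist_le hc (a := y) (b := x) (s := r) hadj.symm; omega
        have hneq : T.dist y r ≠ d := by
          intro hcon
          exact tree_adj_dist_ne hT hadj (s := r) (by omega)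
        have hdy : T.dist y r = d + 1 := by
          rcases Nat.lt_or_ge (T.dist y r) d with hlut | hge
          · exfalso
            have : T.dist y r = d - 1 := by omega
            exact hne ((par_eq hT hx' hadj (by omega)).symm)
          · omega
        exact ⟨hdy, par_eq hT hdy hadj.symm (by omega)⟩
    rw [hfib, Finset.card_erase_of_mem hmem]
    have := hdeg x hxr (by omega)
    rw [degree] at *
    omega

lemma level_card (hT : T.IsTree) {r : V} {h : ℕ}
    (hroot : T.degree r = 2)
    (hdeg : ∀ v, v ≠ r → T.dist v r < h → T.degree v = 3) :
    ∀ d, d ≤ h → (sph T r d).card = 2 ^ d := by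
  intro d
  induction d with
  | zero => intro _; rw [sph_zero hT.isConnected]; simp
  | succ n ih =>
    intro hn
    rw [level_succ hT (by omega) hroot hdeg, ih (by omega)]
    ring

lemma card_V (hT : T.IsTree) {r : V} {h : ℕ} (hecc : ∀ v, T.dist v r ≤ h)
    (hroot : T.degree r = 2)
    (hdeg : ∀ v, v ≠ r → T.dist v r < h → T.degree v = 3) :
    Fintype.card V = 2 ^ (h + 1) - 1 := by
  rw [← Finset.card_univ]
  rw [Finset.card_eq_sum_card_fiberwise (f := fun v => T.dist v r)
    (t := Finset.range (h+1)) (fun x _ => Finset.mem_range.mpr (by simpa using Nat.lt_succ_of_le (hecc x)))]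
  have : ∀ d ∈ Finset.range (h+1),
      (Finset.univ.filter (fun v => T.dist v r = d)).card = 2 ^ d := by
    intro d hd
    rw [Finset.mem_range] at hd
    exact level_card hT hroot hdeg d (by omega)
  rw [Finset.sum_congr rfl this, sum_two_pow]

end

theorem stmt_14 {V : Type*} [Fintype V] (T : SimpleGraph V) (hT : T.IsTree)
    (r : V) (h : ℕ)
    (hroot : (T.neighborSet r).ncard = 2)
    (hecc : ∀ v, T.dist v r ≤ h)
    (hdeg : ∀ v, v ≠ r →
      (T.dist v r < h → (T.neighborSet v).ncard = 3) ∧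
      (T.dist v r = h → (T.neighborSet v).ncard = 1)) :
    psdTh T = h + 1 := by
  have hc := hT.isConnected
  have hroot' : T.degree r = 2 := by rw [← ncard_deg]; exact hroot
  have hdeg' : ∀ v, v ≠ r → T.dist v r < h → T.degree v = 3 := by
    intro v hv hlt
    rw [← ncard_deg]; exact (hdeg v hv).1 hlt
  have hdeg3 : ∀ x : V, T.degree x ≤ 3 := by
    intro x
    by_cases hx : x = r
    · subst hx; omega
    · rcases Nat.lt_or_ge (T.dist x r) h with hlt | hge
      · rw [hdeg' x hx hlt]
      · have : T.dist x r = h := le_antisymm (hecc x) hge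
        have := (hdeg x hx).2 this
        rw [ncard_deg] at this
        omega
  -- h ≥ 1
  have h1 : 1 ≤ h := by
    have hne : (T.neighborSet r).Nonempty :=
      Set.nonempty_of_ncard_ne_zero (by rw [hroot]; omega)
    obtain ⟨v, hv⟩ := hne
    have : T.dist v r = 1 := dist_eq_one_iff_adj.mpr ((T.mem_neighborSet r v).mp hv).symm
    have := hecc v
    omega
  have hcard : Fintype.card V = 2 ^ (h + 1) - 1 := card_V hT hecc hroot' hdeg'
  -- lower bound
  have hlow : ∀ (S : Finset V) (t : ℕ), (psdStep T)^[t] (↑S : Set V) = Set.univ →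
      h + 1 ≤ S.card + t := by
    intro S t hforce
    by_contra hcon
    push_neg at hcon
    have hkt : S.card + t ≤ h := by omega
    have hS1 : 1 ≤ S.card := by
      rcases Nat.eq_zero_or_pos S.card with h0 | h0
      · exfalso
        rw [Finset.card_eq_zero] at h0
        subst h0
        have hfix : psdStep T (↑(∅ : Finset V) : Set V) = ↑(∅ : Finset V) := by
          simp only [Finset.coe_empty, psdStep, Set.empty_union]
          ext w
          simp only [Set.mem_setOf_eq, Set.mem_empty_iff_false, iff_false]
          rintro ⟨v, hv, -⟩
          exact hv
        rw [Function.iterate_fixed hfix] at hforce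
        have : r ∈ (↑(∅ : Finset V) : Set V) := hforce ▸ Set.mem_univ r
        simpa using this
      · exact h0
    -- covering by balls
    have hcover : (Finset.univ : Finset V) ⊆
        S.biUnion (fun s => Finset.univ.filter (fun v => T.dist v s ≤ t)) := by
      intro x _
      have hx := blue_subset_ball hc (↑S) t
      rw [hforce] at hx
      obtain ⟨s, hs, hd⟩ := hx (Set.mem_univ x)
      rw [Finset.mem_biUnion]
      exact ⟨s, hs, by simp [hd]⟩
    have hcount : Fintype.card V ≤ S.card * (3 * 2 ^ t - 2) := by
      calc Fintype.card V = (Finset.univ : Finset V).card := (Finset.card_univ).symm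
        _ ≤ (S.biUnion (fun s => Finset.univ.filter (fun v => T.dist v s ≤ t))).card :=
            Finset.card_le_card hcover
        _ ≤ ∑ s ∈ S, (Finset.univ.filter (fun v => T.dist v s ≤ t)).card :=
            Finset.card_biUnion_le
        _ ≤ ∑ _s ∈ S, (3 * 2 ^ t - 2) :=
            Finset.sum_le_sum (fun s _ => ball_card_le hT hdeg3 s t)
        _ = S.card * (3 * 2 ^ t - 2) := by rw [Finset.sum_const, smul_eq_mul]
    -- arithmetic contradiction
    have e0 : 2 ≤ 3 * 2 ^ t := by have : 1 ≤ 2 ^ t := Nat.one_le_two_pow; omega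
    have eB : S.card * (3 * 2 ^ t - 2) + S.card * 2 = 3 * (S.card * 2 ^ t) := by
      rw [← Nat.mul_add, Nat.sub_add_cancel e0]; ring
    have eC : S.card * 2 ^ t ≤ 2 ^ (h - 1) := by
      have hk : S.card ≤ 2 ^ (S.card - 1) := by
        have : S.card - 1 < 2 ^ (S.card - 1) := Nat.lt_two_pow_self
        omega
      calc S.card * 2 ^ t ≤ 2 ^ (S.card - 1) * 2 ^ t := Nat.mul_le_mul_right _ hk
        _ = 2 ^ (S.card - 1 + t) := (pow_add 2 _ _).symm
        _ ≤ 2 ^ (h - 1) := Nat.pow_le_pow_right (by omega) (by omega)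
    have eD : (2 : ℕ) ^ (h + 1) = 4 * 2 ^ (h - 1) := by
      have : h + 1 = (h - 1) + 2 := by omega
      rw [this, pow_add]; ring
    have eF : 1 ≤ 2 ^ (h - 1) := Nat.one_le_two_pow
    omega
  -- upper bound element
  have hup : (psdStep T)^[h] (↑({r} : Finset V) : Set V) = Set.univ :=
    upper_bound hT r h hecc
  have hfr : IsPSDForcingSet T (↑({r} : Finset V) : Set V) := ⟨h, hup⟩
  have hptle : psdPt T (↑({r} : Finset V) : Set V) ≤ h := Nat.sInf_le hup
  set M := {k | ∃ S : Finset V, IsPSDForcingSet T ↑S ∧ k = S.card + psdPt T ↑S} with hM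
  have hmem : (({r} : Finset V).card + psdPt T (↑({r} : Finset V) : Set V)) ∈ M :=
    ⟨{r}, hfr, rfl⟩
  have hall : ∀ k ∈ M, h + 1 ≤ k := by
    rintro k ⟨S, hS, rfl⟩
    have hne : {t | (psdStep T)^[t] (↑S : Set V) = Set.univ}.Nonempty := hS
    have hmem' := Nat.sInf_mem hne
    exact hlow S (psdPt T ↑S) hmem'
  have hub : sInf M ≤ h + 1 := by
    refine le_trans (Nat.sInf_le hmem) ?_
    have : ({r} : Finset V).card = 1 := Finset.card_singleton r
    omega
  have hlb : h + 1 ≤ sInf M := hall _ (Nat.sInf_mem ⟨_, hmem⟩)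
  rw [psdTh, ← hM]
  omega
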